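/- Let q ∈ ℝ[t] be monic of degree m ≥ 1 and let x1, …, xm ∈ ℂ be its roots counted with multiplicity. For k ∈ ℕ let N_k = x1^k + … + xm^k be the k-th Newton sum. Then each N_k is a real number, and q has only real roots (i.e., q splits over ℝ) if and only if the m×m real Hankel matrix H with entries H_{ij} = N_{i+j}, for 0 ≤ i, j ≤ m−1, is positive semidefinite. -/

import Mathlib

private lemma re_multiset_sum (s : Multiset ℂ) : s.sum.re = (s.map Complex.re).sum := by
  induction s using Multiset.induction_on with
  | empty => simp
  | cons a s ih => simp [ih]

private lemma multiset_sum_finset_sum {α β γ : Type*} [AddCommMonoid γ] (s : Multiset α)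
    (t : Finset β) (f : β → α → γ) :
    (s.map fun a => ∑ i ∈ t, f i a).sum = ∑ i ∈ t, (s.map (f i)).sum := by
  induction s using Multiset.induction_on with
  | empty => simp
  | cons a s ih => simp [ih, Finset.sum_add_distrib]

/-- Let `q ∈ ℝ[t]` be monic of degree `m ≥ 1` with complex roots
`x1, …, xm` counted with multiplicity, and `N k = x1^k + ⋯ + xm^k` the Newton sums.
Then each `N k` is real, and `q` has only real roots if and only if the `m × m` Hankel
(Hermite) matrix `H i j = N (i + j)`, `0 ≤ i, j ≤ m − 1`, is positive semidefinite. -/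
theorem stmt5 (m : ℕ) (hm : 1 ≤ m) (q : Polynomial ℝ) (hq : q.Monic)
    (hdeg : q.natDegree = m)
    (N : ℕ → ℂ)
    (hN : ∀ k : ℕ, N k = (((q.map (algebraMap ℝ ℂ)).roots.map (fun z => z ^ k)).sum)) :
    (∀ k : ℕ, (N k).im = 0) ∧
    ((∀ z ∈ (q.map (algebraMap ℝ ℂ)).roots, z.im = 0) ↔
      (Matrix.of fun i j : Fin m => (N ((i : ℕ) + (j : ℕ))).re).PosSemidef) := by
  classical
  have halg : (starRingEnd ℂ).comp (algebraMap ℝ ℂ) = algebraMap ℝ ℂ := by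
    ext r; simp
  set Q := q.map (algebraMap ℝ ℂ) with hQdef
  have hQdeg : Q.natDegree = m := by
    rw [hQdef, Polynomial.natDegree_map_eq_of_injective (algebraMap ℝ ℂ).injective, hdeg]
  have hsplits : Q.Splits := IsAlgClosed.splits Q
  have hcard : Multiset.card Q.roots = m := by
    rw [Polynomial.splits_iff_card_roots.mp hsplits, hQdeg]
  have hQconj : Q.map (starRingEnd ℂ) = Q := by
    rw [hQdef, Polynomial.map_map, halg]
  have hconj : Q.roots.map (starRingEnd ℂ) = Q.roots := by
    conv_rhs => rw [← hQconj]
    rw [hsplits.roots_map_of_injective (starRingEnd ℂ).injective]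
  have part1 : ∀ k, (N k).im = 0 := by
    intro k
    rw [← Complex.conj_eq_iff_im]
    calc (starRingEnd ℂ) (N k)
        = ((Q.roots.map (starRingEnd ℂ)).map (fun z => z ^ k)).sum := by
          rw [hN k, map_multiset_sum, Multiset.map_map, Multiset.map_map]
          simp [Function.comp_def, map_pow]
      _ = N k := by rw [hconj, hN k]
  have key : ∀ x : Fin m → ℝ,
      (∑ i : Fin m, ∑ j : Fin m, (x i : ℂ) * (x j : ℂ) * N ((i : ℕ) + (j : ℕ)))
        = (Q.roots.map (fun r => (∑ i : Fin m, (x i : ℂ) * r ^ (i : ℕ)) ^ 2)).sum := by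
    intro x
    have h1 : ∀ r : ℂ, (∑ i : Fin m, (x i : ℂ) * r ^ (i : ℕ)) ^ 2
        = ∑ i : Fin m, ∑ j : Fin m, (x i : ℂ) * (x j : ℂ) * r ^ ((i : ℕ) + (j : ℕ)) := by
      intro r
      rw [sq, Finset.sum_mul_sum]
      refine Finset.sum_congr rfl fun i _ => Finset.sum_congr rfl fun j _ => ?_
      rw [pow_add]; ring
    simp_rw [h1, hN]
    rw [multiset_sum_finset_sum]
    refine Finset.sum_congr rfl fun i _ => ?_
    rw [multiset_sum_finset_sum]
    refine Finset.sum_congr rfl fun j _ => ?_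
    rw [← Multiset.sum_map_mul_left]
  set H : Matrix (Fin m) (Fin m) ℝ :=
    Matrix.of fun i j : Fin m => (N ((i : ℕ) + (j : ℕ))).re with hH
  have form_eq : ∀ x : Fin m → ℝ,
      dotProduct (star x) (H.mulVec x)
        = ((Q.roots.map (fun r => (∑ i : Fin m, (x i : ℂ) * r ^ (i : ℕ)) ^ 2)).sum).re := by
    intro x
    rw [← key x, Complex.re_sum]
    simp only [dotProduct, Matrix.mulVec, Pi.star_apply, star_trivial, hH,
      Matrix.of_apply, Finset.mul_sum]
    refine Finset.sum_congr rfl fun i _ => ?_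
    rw [Complex.re_sum]
    refine Finset.sum_congr rfl fun j _ => ?_
    have : ((x i : ℂ) * (x j : ℂ) * N ((i : ℕ) + (j : ℕ)))
        = ((x i * x j : ℝ) : ℂ) * N ((i : ℕ) + (j : ℕ)) := by push_cast; ring
    rw [this, Complex.re_ofReal_mul]
    ring
  refine ⟨part1, ?_, ?_⟩
  · -- real roots → PSD
    intro hreal
    rw [Matrix.posSemidef_iff_dotProduct_mulVec]
    constructor
    · ext i j
      simp only [Matrix.conjTranspose_apply, hH, Matrix.of_apply, star_trivial]
      rw [Nat.add_comm (j : ℕ) (i : ℕ)]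
    · intro x
      rw [form_eq x, re_multiset_sum, Multiset.map_map]
      apply Multiset.sum_nonneg
      intro v hv
      obtain ⟨r, hr, rfl⟩ := Multiset.mem_map.mp hv
      have hrre : r = ((r.re : ℝ) : ℂ) := by
        apply Complex.ext <;> simp [hreal r hr]
      have : (∑ i : Fin m, (x i : ℂ) * r ^ (i : ℕ))
          = (((∑ i : Fin m, x i * r.re ^ (i : ℕ) : ℝ)) : ℂ) := by
        rw [hrre]; push_cast; rfl
      simp only [Function.comp_apply]
      rw [this, ← Complex.ofReal_pow, Complex.ofReal_re]
      exact sq_nonneg _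
  · -- PSD → real roots
    intro hPSD z hz
    by_contra him
    set μ := Q.roots.count z with hμdef
    have hμpos : 0 < μ := Multiset.count_pos.mpr hz
    set z' := (starRingEnd ℂ) z with hz'def
    have hzz' : z' ≠ z := fun h => him (Complex.conj_eq_iff_im.mp h)
    have hcount' : Q.roots.count z' = μ := by
      conv_lhs => rw [← hconj]
      exact Multiset.count_map_eq_count' _ _ (starRingEnd ℂ).injective z
    have hle1 : Multiset.replicate μ z ≤ Q.roots :=
      Multiset.le_count_iff_replicate_le.mp le_rfl
    have hle2 : Multiset.replicate μ z' ≤ Q.roots - Multiset.replicate μ z := by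
      rw [← Multiset.le_count_iff_replicate_le, Multiset.count_sub, hcount',
        Multiset.count_replicate]
      simp [hzz'.symm]
    set T := Q.roots - Multiset.replicate μ z - Multiset.replicate μ z' with hT
    have hdecomp : T + Multiset.replicate μ z' + Multiset.replicate μ z = Q.roots := by
      rw [hT, tsub_add_cancel_of_le hle2, tsub_add_cancel_of_le hle1]
    have hcardT : Multiset.card T + μ + μ = m := by
      have := congrArg Multiset.card hdecomp
      simpa [hcard] using this
    have hcz : T.count z = 0 := by
      rw [hT, Multiset.count_sub, Multiset.count_sub, ← hμdef,
        Multiset.count_replicate, Multiset.count_replicate]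
      simp [hzz']
    have hcz' : T.count z' = 0 := by
      rw [hT, Multiset.count_sub, Multiset.count_sub, hcount',
        Multiset.count_replicate, Multiset.count_replicate]
      simp [hzz', hzz'.symm]
    have hzT : z ∉ T := Multiset.count_eq_zero.mp hcz
    set g : Polynomial ℂ := (T.map (fun w => Polynomial.X - Polynomial.C w)).prod with hg
    have hgdeg : g.natDegree = Multiset.card T := by
      rw [hg, Polynomial.natDegree_multiset_prod_of_monic]
      · simp [Multiset.map_map, Function.comp_def]
      · intro f hf
        obtain ⟨w, _, rfl⟩ := Multiset.mem_map.mp hf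
        exact Polynomial.monic_X_sub_C w
    have hgz : g.eval z ≠ 0 := by
      rw [hg, Polynomial.eval_multiset_prod]
      apply Multiset.prod_ne_zero
      rw [Multiset.map_map]
      intro h0
      obtain ⟨w, hw, hwe⟩ := Multiset.mem_map.mp h0
      simp only [Function.comp_apply, Polynomial.eval_sub, Polynomial.eval_X,
        Polynomial.eval_C] at hwe
      have : w = z := by linear_combination -hwe
      exact hzT (this ▸ hw)
    have hgT : ∀ w ∈ T, g.eval w = 0 := by
      intro w hw
      rw [hg, Polynomial.eval_multiset_prod]
      apply Multiset.prod_eq_zero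
      rw [Multiset.map_map]
      exact Multiset.mem_map.mpr ⟨w, hw, by simp⟩
    have hTconj : T.map (starRingEnd ℂ) = T := by
      have h2 := congrArg (Multiset.map (starRingEnd ℂ)) hdecomp
      rw [Multiset.map_add, Multiset.map_add, Multiset.map_replicate,
        Multiset.map_replicate, hconj, ← hdecomp,
        show (starRingEnd ℂ) z' = z from Complex.conj_conj z, ← hz'def,
        add_right_comm T] at h2
      exact add_right_cancel (add_right_cancel h2)
    have hgconj : g.map (starRingEnd ℂ) = g := by
      rw [hg, Polynomial.map_multiset_prod, Multiset.map_map]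
      conv_rhs => rw [← hTconj, Multiset.map_map]
      congr 1
      apply Multiset.map_congr rfl
      intro w _
      simp
    set c : ℂ := Complex.I / g.eval z with hc
    have hcne : c ≠ 0 := div_ne_zero Complex.I_ne_zero hgz
    set b : ℝ := c.im / z.im with hb
    set a : ℝ := c.re - b * z.re with ha
    set L : Polynomial ℂ := Polynomial.C (a : ℂ) + Polynomial.C (b : ℂ) * Polynomial.X with hL
    have hLz : L.eval z = c := by
      rw [hL]
      simp only [Polynomial.eval_add, Polynomial.eval_C, Polynomial.eval_mul, Polynomial.eval_X]
      apply Complex.ext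
      · simp only [Complex.add_re, Complex.ofReal_re, Complex.mul_re, Complex.ofReal_im, ha]
        ring
      · simp only [Complex.add_im, Complex.ofReal_im, Complex.mul_im, Complex.ofReal_re, hb]
        field_simp
        ring
    have hLconj : L.map (starRingEnd ℂ) = L := by
      simp [hL, Polynomial.map_add, Polynomial.map_mul, Polynomial.map_C, Polynomial.map_X,
        Complex.conj_ofReal]
    set P := L * g with hP
    have hPconj : P.map (starRingEnd ℂ) = P := by
      rw [hP, Polynomial.map_mul, hLconj, hgconj]
    have hPz : P.eval z = Complex.I := by
      rw [hP, Polynomial.eval_mul, hLz, hc, div_mul_cancel₀ _ hgz]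
    have hPz' : P.eval z' = -Complex.I := by
      have h4 : P.eval z' = (starRingEnd ℂ) (P.eval z) := by
        conv_lhs => rw [← hPconj]
        rw [hz'def, Polynomial.eval_map, Polynomial.eval₂_at_apply]
      rw [h4, hPz]
      simp
    have hPT : ∀ w ∈ T, P.eval w = 0 := by
      intro w hw
      rw [hP, Polynomial.eval_mul, hgT w hw, mul_zero]
    have hPdeg : P.natDegree < m := by
      have h1 : L.natDegree ≤ 1 := by
        refine le_trans (Polynomial.natDegree_add_le _ _) ?_
        simp only [Polynomial.natDegree_C, max_le_iff]
        refine ⟨Nat.zero_le _, le_trans Polynomial.natDegree_mul_le ?_⟩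
        simp
      have h2 : P.natDegree ≤ L.natDegree + g.natDegree := Polynomial.natDegree_mul_le
      rw [hgdeg] at h2
      omega
    set x : Fin m → ℝ := fun i => (P.coeff i).re with hx
    have hcoeff : ∀ i : Fin m, ((x i : ℝ) : ℂ) = P.coeff (i : ℕ) := by
      intro i
      rw [hx]
      apply Complex.conj_eq_iff_re.mp
      conv_rhs => rw [← hPconj]
      rw [Polynomial.coeff_map]
    have heval : ∀ w : ℂ, (∑ i : Fin m, (x i : ℂ) * w ^ (i : ℕ)) = P.eval w := by
      intro w
      rw [Polynomial.eval_eq_sum_range' hPdeg, Finset.sum_range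
        (fun i => P.coeff i * w ^ i)]
      refine Finset.sum_congr rfl fun i _ => ?_
      rw [hcoeff i]
    have hform := (Matrix.posSemidef_iff_dotProduct_mulVec.mp hPSD).2 x
    rw [form_eq x] at hform
    have hsum : (Q.roots.map (fun r => (∑ i : Fin m, (x i : ℂ) * r ^ (i : ℕ)) ^ 2)).sum
        = -(2 * (μ : ℂ)) := by
      rw [show (fun r : ℂ => (∑ i : Fin m, (x i : ℂ) * r ^ (i : ℕ)) ^ 2)
          = fun r => (P.eval r) ^ 2 from funext fun r => by rw [heval r]]
      rw [← hdecomp, Multiset.map_add, Multiset.map_add, Multiset.sum_add, Multiset.sum_add]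
      have hT0 : (T.map fun r => (P.eval r) ^ 2).sum = 0 := by
        apply Multiset.sum_eq_zero
        intro v hv
        obtain ⟨w, hw, rfl⟩ := Multiset.mem_map.mp hv
        rw [hPT w hw]
        ring
      rw [hT0, Multiset.map_replicate, Multiset.map_replicate, hPz, hPz',
        Multiset.sum_replicate, Multiset.sum_replicate]
      simp only [nsmul_eq_mul]
      rw [show (-Complex.I) ^ 2 = -1 by rw [neg_pow]; simp [Complex.I_sq],
        show Complex.I ^ 2 = -1 from Complex.I_sq]
      ring
    rw [hsum] at hform
    have hre : (-(2 * (μ : ℂ))).re = -(2 * (μ : ℝ)) := by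
      simp
    rw [hre] at hform
    have : (0 : ℝ) < 2 * (μ : ℝ) := by positivity
    linarith
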